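/- Let z be a point in the open unit disc and λ a point on the unit circle. Then the supremum over ζ on the unit circle of |ζ - λ|/|ζ - z| equals 2|λ - z|/(1 - |z|²). -/

import Mathlib

open Complex

private lemma sq_le_of (x y : ℝ) (hx : 0 ≤ x) (hy : 0 ≤ y) (h : x^2 ≤ y^2) : x ≤ y := by
  nlinarith

private lemma sq_eq_of (x y : ℝ) (hx : 0 ≤ x) (hy : 0 ≤ y) (h : x^2 = y^2) : x = y := by
  nlinarith [sq_nonneg (x-y), sq_nonneg (x+y)]

private lemma aux_div (A B C c s L R : ℝ) (hA : 0 < A)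
    (hid : 2*A*(R - L) = (B+A*c)^2+(C+A*s)^2) : L ≤ R := by
  nlinarith [sq_nonneg (B+A*c), sq_nonneg (C+A*s)]

private lemma key_ineq (u v c s : ℝ) (h1 : c^2+s^2 = 1) (h2 : u^2+v^2 < 1) :
    (2-2*c)*(1-(u^2+v^2))^2 ≤ 4*((1-u)^2+v^2)*((1+(u^2+v^2))-2*(c*u+s*v)) := by
  set A : ℝ := 4*((1-u)^2+v^2)*(1+(u^2+v^2))-2*(1-(u^2+v^2))^2 with hAdef
  set B : ℝ := 2*(1-(u^2+v^2))^2 - 8*((1-u)^2+v^2)*u with hBdef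
  set C : ℝ := -8*((1-u)^2+v^2)*v with hCdef
  have hu : u < 1 := by nlinarith [sq_nonneg (u-1), sq_nonneg v]
  have hA : 0 < A := by
    have hAe : A = 2*((1-u)^2+v^2)^2 + 8*v^2 := by rw [hAdef]; ring
    have h1u : (0:ℝ) < 1 - u := by linarith
    have hD : 0 < (1-u)^2+v^2 := by nlinarith [sq_nonneg v, pow_pos h1u 2]
    rw [hAe]; nlinarith [pow_pos hD 2, sq_nonneg v]
  have hident : 2*A*(4*((1-u)^2+v^2)*((1+(u^2+v^2))-2*(c*u+s*v))
      - (2-2*c)*(1-(u^2+v^2))^2) = (B+A*c)^2+(C+A*s)^2 := by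
    rw [hAdef, hBdef, hCdef]; linear_combination
      (-(4*((1-u)^2+v^2)*(1+(u^2+v^2))-2*(1-(u^2+v^2))^2)^2) * h1
  exact aux_div A B C c s _ _ hA hident

private lemma key_eq (u v : ℝ) (h2 : u^2+v^2 < 1) :
    ∃ c s : ℝ, c^2+s^2 = 1 ∧
      (2-2*c)*(1-(u^2+v^2))^2 = 4*((1-u)^2+v^2)*((1+(u^2+v^2))-2*(c*u+s*v)) := by
  set A : ℝ := 4*((1-u)^2+v^2)*(1+(u^2+v^2))-2*(1-(u^2+v^2))^2 with hAdef
  set B : ℝ := 2*(1-(u^2+v^2))^2 - 8*((1-u)^2+v^2)*u with hBdef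
  set C : ℝ := -8*((1-u)^2+v^2)*v with hCdef
  have hu : u < 1 := by nlinarith [sq_nonneg (u-1), sq_nonneg v]
  have hA : 0 < A := by
    have hAe : A = 2*((1-u)^2+v^2)^2 + 8*v^2 := by rw [hAdef]; ring
    have h1u : (0:ℝ) < 1 - u := by linarith
    have hD : 0 < (1-u)^2+v^2 := by nlinarith [sq_nonneg v, pow_pos h1u 2]
    rw [hAe]; nlinarith [pow_pos hD 2, sq_nonneg v]
  have hid : A^2 = B^2 + C^2 := by rw [hAdef, hBdef, hCdef]; ring
  refine ⟨-B/A, -C/A, ?_, ?_⟩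
  · field_simp
    linear_combination hid.symm
  · have hzero : A + B*(-B/A) + C*(-C/A) = 0 := by
      field_simp
      linear_combination hid
    linear_combination -hzero

theorem stmt0 (z lam : ℂ) (hz : ‖z‖ < 1) (hlam : ‖lam‖ = 1) :
    sSup {x : ℝ | ∃ ζ : ℂ, ‖ζ‖ = 1 ∧ x = ‖ζ - lam‖ / ‖ζ - z‖} =
      2 * ‖lam - z‖ / (1 - ‖z‖ ^ 2) := by
  have habsz := norm_nonneg z
  have hP : 0 < 1 - ‖z‖ ^ 2 := by nlinarith
  have hnlam : Complex.normSq lam = 1 := by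
    rw [← Complex.sq_norm, hlam]; norm_num
  have hlam1 : (starRingEnd ℂ) lam * lam = 1 := by
    rw [mul_comm, Complex.mul_conj, hnlam, Complex.ofReal_one]
  set a : ℂ := (starRingEnd ℂ) lam * z with hadef
  have hna : Complex.normSq a = Complex.normSq z := by
    rw [hadef, Complex.normSq_mul, Complex.normSq_conj, hnlam, one_mul]
  have huv : a.re^2 + a.im^2 = Complex.normSq z := by
    rw [← hna, Complex.normSq_apply]; ring
  have hz2 : a.re^2 + a.im^2 < 1 := by
    rw [huv, ← Complex.sq_norm]; nlinarith
  have hnz2 : Complex.normSq z = ‖z‖ ^ 2 := (Complex.sq_norm z).symm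
  -- transfer lemma for any ζ on circle
  have transfer : ∀ ζ : ℂ, ‖ζ‖ = 1 →
      Complex.normSq (ζ - lam) = 2 - 2*(((starRingEnd ℂ) lam * ζ).re) ∧
      Complex.normSq (ζ - z) = (1 + (a.re^2+a.im^2))
        - 2*(((starRingEnd ℂ) lam * ζ).re * a.re + ((starRingEnd ℂ) lam * ζ).im * a.im) ∧
      ((starRingEnd ℂ) lam * ζ).re^2 + ((starRingEnd ℂ) lam * ζ).im^2 = 1 := by
    intro ζ hζ
    set η : ℂ := (starRingEnd ℂ) lam * ζ with hηdef
    have hηn : Complex.normSq η = 1 := by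
      rw [hηdef, Complex.normSq_mul, Complex.normSq_conj, hnlam, one_mul, ← Complex.sq_norm, hζ]
      norm_num
    have hη1 : η.re^2 + η.im^2 = 1 := by
      rw [Complex.normSq_apply] at hηn; linear_combination hηn
    have e1 : Complex.normSq (ζ - lam) = Complex.normSq (η - 1) := by
      have : η - 1 = (starRingEnd ℂ) lam * (ζ - lam) := by
        rw [hηdef, mul_sub, hlam1]
      rw [this, Complex.normSq_mul, Complex.normSq_conj, hnlam, one_mul]
    have e2 : Complex.normSq (ζ - z) = Complex.normSq (η - a) := by
      have : η - a = (starRingEnd ℂ) lam * (ζ - z) := by rw [hηdef, hadef, mul_sub]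
      rw [this, Complex.normSq_mul, Complex.normSq_conj, hnlam, one_mul]
    refine ⟨?_, ?_, hη1⟩
    · rw [e1, Complex.normSq_apply]; simp [Complex.sub_re, Complex.sub_im]; nlinarith [hη1]
    · rw [e2, Complex.normSq_apply]; simp [Complex.sub_re, Complex.sub_im]; nlinarith [hη1]
  have hlz : Complex.normSq (lam - z) = (1 - a.re)^2 + a.im^2 := by
    have : (1 : ℂ) - a = (starRingEnd ℂ) lam * (lam - z) := by rw [hadef, mul_sub, hlam1]
    have h' : Complex.normSq (lam - z) = Complex.normSq (1 - a) := by
      rw [this, Complex.normSq_mul, Complex.normSq_conj, hnlam, one_mul]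
    rw [h', Complex.normSq_apply]; simp [Complex.sub_re, Complex.sub_im]; ring
  -- upper bound
  have hub : ∀ x ∈ {x : ℝ | ∃ ζ : ℂ, ‖ζ‖ = 1 ∧
      x = ‖ζ - lam‖ / ‖ζ - z‖},
      x ≤ 2 * ‖lam - z‖ / (1 - ‖z‖ ^ 2) := by
    rintro x ⟨ζ, hζ, rfl⟩
    obtain ⟨e1, e2, hη1⟩ := transfer ζ hζ
    have hineq := key_ineq a.re a.im ((starRingEnd ℂ) lam * ζ).re ((starRingEnd ℂ) lam * ζ).im hη1 hz2
    rw [← e1, ← e2] at hineq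
    have hW : 0 < ‖ζ - z‖ := by
      rw [norm_pos_iff, sub_ne_zero]
      intro h; rw [h] at hζ; linarith
    have hlzineq : Complex.normSq (ζ - lam) * (1 - ‖z‖^2)^2
        ≤ 4 * Complex.normSq (lam - z) * Complex.normSq (ζ - z) := by
      rw [hlz, ← hnz2, ← huv]
      linarith [hineq]
    have habs : ‖ζ - lam‖ * (1 - ‖z‖^2)
        ≤ 2 * ‖lam - z‖ * ‖ζ - z‖ := by
      have s1 : ‖ζ - lam‖^2 = Complex.normSq (ζ - lam) := Complex.sq_norm _
      have s2 : ‖lam - z‖^2 = Complex.normSq (lam - z) := Complex.sq_norm _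
      have s3 : ‖ζ - z‖^2 = Complex.normSq (ζ - z) := Complex.sq_norm _
      refine sq_le_of _ _ (mul_nonneg (norm_nonneg _) hP.le)
        (by positivity) ?_
      rw [mul_pow, mul_pow, mul_pow, s1, s2, s3]
      linarith [hlzineq]
    rw [div_le_div_iff₀ hW hP]
    linarith [habs]
  -- membership: equality attained
  obtain ⟨c, s, hcs, heq⟩ := key_eq a.re a.im hz2
  have hmem : 2 * ‖lam - z‖ / (1 - ‖z‖ ^ 2) ∈
      {x : ℝ | ∃ ζ : ℂ, ‖ζ‖ = 1 ∧
        x = ‖ζ - lam‖ / ‖ζ - z‖} := by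
    refine ⟨lam * (⟨c, s⟩ : ℂ), ?_, ?_⟩
    · rw [norm_mul, hlam, one_mul]
      rw [Complex.norm_def, Complex.normSq_mk]
      rw [show c*c + s*s = c^2+s^2 by ring, hcs, Real.sqrt_one]
    · set ζ := lam * (⟨c, s⟩ : ℂ) with hζdef
      have hζabs : ‖ζ‖ = 1 := by
        rw [hζdef, norm_mul, hlam, one_mul, Complex.norm_def, Complex.normSq_mk]
        rw [show c*c + s*s = c^2+s^2 by ring, hcs, Real.sqrt_one]
      have hηre : ((starRingEnd ℂ) lam * ζ) = (⟨c, s⟩ : ℂ) := by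
        rw [hζdef, ← mul_assoc, hlam1, one_mul]
      obtain ⟨e1, e2, _⟩ := transfer ζ hζabs
      rw [hηre] at e1 e2
      simp only [] at e1 e2
      have hW : 0 < ‖ζ - z‖ := by
        rw [norm_pos_iff, sub_ne_zero]
        intro h; rw [h] at hζabs; linarith
      have heqn : Complex.normSq (ζ - lam) * (1 - ‖z‖^2)^2
          = 4 * Complex.normSq (lam - z) * Complex.normSq (ζ - z) := by
        rw [hlz, ← hnz2, ← huv, e1, e2]
        linarith [heq]
      have habs : ‖ζ - lam‖ * (1 - ‖z‖^2)
          = 2 * ‖lam - z‖ * ‖ζ - z‖ := by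
        have s1 : ‖ζ - lam‖^2 = Complex.normSq (ζ - lam) := Complex.sq_norm _
        have s2 : ‖lam - z‖^2 = Complex.normSq (lam - z) := Complex.sq_norm _
        have s3 : ‖ζ - z‖^2 = Complex.normSq (ζ - z) := Complex.sq_norm _
        refine sq_eq_of _ _ (mul_nonneg (norm_nonneg _) hP.le) (by positivity) ?_
        rw [mul_pow, mul_pow, mul_pow, s1, s2, s3]
        linarith [heqn]
      rw [eq_comm, div_eq_div_iff hW.ne' hP.ne']
      linarith [habs]
  apply le_antisymm
  · exact csSup_le ⟨_, hmem⟩ hub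
  · exact le_csSup ⟨_, fun x hx => hub x hx⟩ hmem
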